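/- Let v : [0,∞) → ℝ be a nonnegative differentiable function and C > 0 such that v'(t) ≤ C e^{-t} √(v(t)) - v(t) for all t ≥ 0. Then there exists a constant C' (depending only on C and v(0)) with v(t) ≤ C' e^{-t/2} for all t ≥ 0. -/

import Mathlib

theorem stmt2 (v : ℝ → ℝ) (C : ℝ) (hC : 0 < C)
    (hdiff : ∀ t, 0 ≤ t → DifferentiableAt ℝ v t)
    (hpos : ∀ t, 0 ≤ t → 0 ≤ v t)
    (hineq : ∀ t, 0 ≤ t →
      deriv v t ≤ C * Real.exp (-t) * Real.sqrt (v t) - v t) :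
    ∃ C' : ℝ, ∀ t, 0 ≤ t → v t ≤ C' * Real.exp (-t / 2) := by
  set K : ℝ := v 0 + 4 * C ^ 2 + 1 with hKdef
  have hK4 : 4 * C ^ 2 < K := by
    have := hpos 0 le_rfl; linarith
  have hKpos : 0 < K := by nlinarith
  refine ⟨K, fun t ht => ?_⟩
  have key : ∀ ⦃x⦄, x ∈ Set.Icc (0:ℝ) t → v x ≤ K * Real.exp (-x / 2) := by
    refine image_le_of_deriv_right_lt_deriv_boundary (f := v) (f' := deriv v)
      (B := fun x => K * Real.exp (-x / 2))
      (B' := fun x => K * (Real.exp (-x / 2) * (-1 / 2))) ?_ ?_ ?_ ?_ ?_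
    · exact fun x hx => (hdiff x hx.1).continuousAt.continuousWithinAt
    · exact fun x hx => (hdiff x hx.1).hasDerivAt.hasDerivWithinAt
    · simp only [neg_zero, zero_div, Real.exp_zero, mul_one]
      nlinarith
    · intro x
      exact (((hasDerivAt_id x).neg.div_const 2).exp).const_mul K
    · intro x hx heq
      have hx0 : (0:ℝ) ≤ x := hx.1
      have h1 := hineq x hx0
      have hsq : Real.sqrt (v x) = Real.sqrt K * Real.exp (-x / 4) := by
        rw [heq, Real.sqrt_mul hKpos.le]
        congr 1
        rw [show Real.exp (-x / 2) = Real.exp (-x / 4) ^ 2 by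
          rw [sq, ← Real.exp_add]; ring_nf]
        exact Real.sqrt_sq (Real.exp_pos _).le
      rw [hsq, heq] at h1
      refine lt_of_le_of_lt h1 ?_
      -- need : C * exp(-x) * (√K * exp(-x/4)) - K exp(-x/2) < K * (exp(-x/2) * (-1/2))
      have hsK : Real.sqrt K ^ 2 = K := Real.sq_sqrt hKpos.le
      have h2C : 2 * C < Real.sqrt K := by
        nlinarith [Real.sqrt_nonneg K, hC.le]
      have hee : Real.exp (-x) * Real.exp (-x / 4) ≤ Real.exp (-x / 2) := by
        rw [← Real.exp_add]
        apply Real.exp_le_exp.mpr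
        linarith
      have hepos : (0:ℝ) < Real.exp (-x / 2) := Real.exp_pos _
      have hepos2 : (0:ℝ) < Real.exp (-x) * Real.exp (-x / 4) :=
        mul_pos (Real.exp_pos _) (Real.exp_pos _)
      have hCK : 0 ≤ C * Real.sqrt K := mul_nonneg hC.le (Real.sqrt_nonneg K)
      have hA : C * Real.sqrt K * (Real.exp (-x) * Real.exp (-x / 4)) ≤
          C * Real.sqrt K * Real.exp (-x / 2) := mul_le_mul_of_nonneg_left hee hCK
      have hB : C * Real.sqrt K * Real.exp (-x / 2) < K / 2 * Real.exp (-x / 2) := by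
        have hCK2 : C * Real.sqrt K < K / 2 := by nlinarith [Real.sqrt_nonneg K]
        exact mul_lt_mul_of_pos_right hCK2 hepos
      beta_reduce
      nlinarith [hA, hB]
  exact key ⟨ht, le_rfl⟩
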